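/- For every integer L ≥ 2, every real C ≥ 1, every integer p ≥ 1, every J > 0 and every β ≥ 0, the non-linear model partition function satisfies the 'ordered' lower bound Z_Λ(β,J,p) ≥ (1/(πC√p))^{L²} · exp(2βJ·(1 − 1/C²)·L²). -/

import Mathlib

open MeasureTheory Real

/-- The site space: the discrete torus of side `L`. -/
abbrev Torus (L : ℕ) := ZMod L × ZMod L

/-- A configuration of the non-linear model: one spin in the circle `ℝ/2πℤ` per site. -/
abbrev NLConfig (L : ℕ) := Torus L → AddCircle (2 * Real.pi)

/-- The two unit coordinate vectors `e₁ = (1,0)` and `e₂ = (0,1)`. -/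
def coordVec (L : ℕ) : Fin 2 → Torus L
  | 0 => (1, 0)
  | 1 => (0, 1)

instance : Fact ((0 : ℝ) < 2 * Real.pi) := ⟨by positivity⟩

/-- The product of normalized Haar measures on the spins. -/
noncomputable def nlMeasure (L : ℕ) [NeZero L] : Measure (NLConfig L) :=
  Measure.pi fun _ => (AddCircle.haarAddCircle : Measure (AddCircle (2 * Real.pi)))

/-- The non-linear Hamiltonian
`H_{p,J}(φ) = −J·Σ_{bonds (x,y)} ((1 + cos(φ_x − φ_y))/2)^p`. -/
noncomputable def nlH (L : ℕ) [NeZero L] (p : ℕ) (J : ℝ) (φ : NLConfig L) : ℝ :=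
  -J * ∑ x : Torus L, ∑ i : Fin 2,
    ((1 + Real.Angle.cos (φ x - φ (x + coordVec L i))) / 2) ^ p

/-- The non-linear model partition function. -/
noncomputable def nlZ (L : ℕ) [NeZero L] (β J : ℝ) (p : ℕ) : ℝ :=
  ∫ φ, Real.exp (-β * nlH L p J φ) ∂(nlMeasure L)

lemma norm_angle_eq (θ : AddCircle (2 * Real.pi)) : ‖θ‖ = |Real.Angle.toReal θ| := by
  have h2 : ((Real.Angle.toReal θ : ℝ) : AddCircle (2 * Real.pi)) = θ := Real.Angle.coe_toReal θ
  have h3 : |2 * Real.pi| = 2 * Real.pi := abs_of_pos (by positivity)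
  have h4 : |Real.Angle.toReal θ| ≤ |2 * Real.pi| / 2 := by
    rw [h3]; have := Real.Angle.abs_toReal_le_pi θ; linarith
  conv_lhs => rw [← h2]
  exact (AddCircle.norm_coe_eq_abs_iff _ (by positivity : (0:ℝ) < 2 * Real.pi).ne').mpr h4

lemma angle_cos_eq (θ : AddCircle (2 * Real.pi)) :
    Real.Angle.cos θ = Real.cos (Real.Angle.toReal θ) := by
  conv_lhs => rw [← Real.Angle.coe_toReal θ]
  rw [Real.Angle.cos_coe]

lemma bond_term_le_one (p : ℕ) (θ : AddCircle (2 * Real.pi)) :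
    ((1 + Real.Angle.cos θ) / 2) ^ p ≤ 1 := by
  apply pow_le_one₀
  · rw [angle_cos_eq]; nlinarith [Real.neg_one_le_cos (Real.Angle.toReal θ)]
  · rw [angle_cos_eq]; nlinarith [Real.cos_le_one (Real.Angle.toReal θ)]

lemma bond_bound (C : ℝ) (hC : 1 ≤ C) (p : ℕ) (hp : 1 ≤ p)
    (θ : AddCircle (2 * Real.pi)) (hθ : ‖θ‖ ≤ 2 * (1 / (C * Real.sqrt p))) :
    1 - 1 / C ^ 2 ≤ ((1 + Real.Angle.cos θ) / 2) ^ p := by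
  set r : ℝ := 1 / (C * Real.sqrt p) with hr
  have hp0 : (0 : ℝ) < p := by exact_mod_cast Nat.lt_of_lt_of_le Nat.zero_lt_one hp
  have hsp : 0 < Real.sqrt p := Real.sqrt_pos.2 hp0
  have hC0 : (0:ℝ) < C := lt_of_lt_of_le one_pos hC
  have hr0 : 0 < r := by positivity
  have hsp1 : 1 ≤ Real.sqrt p := by rw [Real.one_le_sqrt]; exact_mod_cast hp
  have hr1 : r ≤ 1 := by
    rw [hr, div_le_one (by positivity)]
    nlinarith
  have hrsq : r ^ 2 = 1 / (C ^ 2 * p) := by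
    rw [hr, div_pow, one_pow, mul_pow, Real.sq_sqrt hp0.le]
  set a : ℝ := Real.Angle.toReal θ with ha
  have hcos : Real.Angle.cos θ = Real.cos a := angle_cos_eq θ
  have haa : |a| ≤ 2 * r := by rw [ha, ← norm_angle_eq]; exact hθ
  have hcb : 1 - a ^ 2 / 2 ≤ Real.cos a := Real.one_sub_sq_div_two_le_cos
  have h1 : 1 - r ^ 2 ≤ (1 + Real.Angle.cos θ) / 2 := by
    rw [hcos]
    have : a ^ 2 ≤ (2 * r) ^ 2 := by
      have := sq_abs a
      nlinarith [abs_nonneg a]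
    nlinarith
  have h2 : (1 - r ^ 2) ^ p ≤ ((1 + Real.Angle.cos θ) / 2) ^ p := by
    apply pow_le_pow_left₀ (by nlinarith) h1
  refine le_trans ?_ h2
  have hb : 1 + (p : ℝ) * (-(r ^ 2)) ≤ (1 + -(r ^ 2)) ^ p := by
    apply one_add_mul_le_pow
    nlinarith
  have hpr : (p : ℝ) * r ^ 2 = 1 / C ^ 2 := by
    rw [hrsq]; field_simp
  calc 1 - 1 / C ^ 2 = 1 + (p:ℝ) * (-(r ^ 2)) := by rw [← hpr]; ring
    _ ≤ (1 + -(r ^ 2)) ^ p := hb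
    _ = (1 - r ^ 2) ^ p := by ring_nf

/-- the 'ordered' lower bound on the non-linear model partition
function: `Z_Λ(β,J,p) ≥ (1/(πC√p))^{L²}·exp(2βJ(1 − 1/C²)L²)`. -/
theorem nl_ordered_lower_bound (L : ℕ) (hL : 2 ≤ L) (C : ℝ) (hC : 1 ≤ C)
    (p : ℕ) (hp : 1 ≤ p) (J : ℝ) (hJ : 0 < J) (β : ℝ) (hβ : 0 ≤ β) :
    haveI : NeZero L := ⟨by omega⟩
    nlZ L β J p ≥
      (1 / (Real.pi * C * Real.sqrt p)) ^ (L ^ 2) *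
        Real.exp (2 * β * J * (1 - 1 / C ^ 2) * L ^ 2) := by
  haveI : NeZero L := ⟨by omega⟩
  have hC0 : (0:ℝ) < C := lt_of_lt_of_le one_pos hC
  have hp0 : (0 : ℝ) < p := by exact_mod_cast Nat.lt_of_lt_of_le Nat.zero_lt_one hp
  have hsp : 0 < Real.sqrt p := Real.sqrt_pos.2 hp0
  have hsp1 : 1 ≤ Real.sqrt p := by rw [Real.one_le_sqrt]; exact_mod_cast hp
  set r : ℝ := 1 / (C * Real.sqrt p) with hr
  have hr0 : 0 < r := by positivity
  have hr1 : r ≤ 1 := by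
    rw [hr, div_le_one (by positivity)]
    nlinarith
  have hπ3 : (3:ℝ) < Real.pi := Real.pi_gt_three
  set A : Set (AddCircle (2 * Real.pi)) := Metric.closedBall 0 r with hA
  set S : Set (NLConfig L) := Set.pi Set.univ (fun _ => A) with hS
  have hAmeas : MeasurableSet A := measurableSet_closedBall
  have hSmeas : MeasurableSet S := MeasurableSet.univ_pi (fun _ => hAmeas)
  -- the measure of the arc
  have hμA : (AddCircle.haarAddCircle : Measure (AddCircle (2 * Real.pi))) A
      = ENNReal.ofReal (r / Real.pi) := by
    have h1 : (volume : Measure (AddCircle (2 * Real.pi))) A = ENNReal.ofReal (2 * r) := by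
      rw [hA, AddCircle.volume_closedBall, min_eq_right (by nlinarith)]
    have h2 : (volume : Measure (AddCircle (2 * Real.pi))) A
        = ENNReal.ofReal (2 * Real.pi) * AddCircle.haarAddCircle A := by
      rw [AddCircle.volume_eq_smul_haarAddCircle]; rfl
    have h3 : ENNReal.ofReal (2 * Real.pi) * AddCircle.haarAddCircle A
        = ENNReal.ofReal (2 * Real.pi) * ENNReal.ofReal (r / Real.pi) := by
      rw [← h2, h1, ← ENNReal.ofReal_mul (by positivity)]
      congr 1
      field_simp
    exact (ENNReal.mul_right_inj
      (ENNReal.ofReal_pos.2 (by positivity)).ne' ENNReal.ofReal_ne_top).mp h3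
  have hcardT : Fintype.card (Torus L) = L ^ 2 := by
    simp [Fintype.card_prod, ZMod.card, sq]
  have hμS : nlMeasure L S = ENNReal.ofReal (r / Real.pi) ^ (L ^ 2) := by
    rw [hS, nlMeasure, Measure.pi_pi]
    simp only [hμA, Finset.prod_const, Finset.card_univ, hcardT]
  -- the constant lower bound on S
  set c : ℝ := Real.exp (2 * β * J * (1 - 1 / C ^ 2) * L ^ 2) with hc
  have hbound : ∀ φ ∈ S, c ≤ Real.exp (-β * nlH L p J φ) := by
    intro φ hφ
    rw [hc]
    apply Real.exp_le_exp.mpr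
    have hterm : ∀ x : Torus L, ∀ i : Fin 2, 1 - 1 / C ^ 2 ≤
        ((1 + Real.Angle.cos (φ x - φ (x + coordVec L i))) / 2) ^ p := by
      intro x i
      apply bond_bound C hC p hp
      have h1 : ‖φ x‖ ≤ r := by
        have := hφ x (Set.mem_univ x)
        rwa [hA, Metric.mem_closedBall, dist_zero_right] at this
      have h2 : ‖φ (x + coordVec L i)‖ ≤ r := by
        have := hφ (x + coordVec L i) (Set.mem_univ _)
        rwa [hA, Metric.mem_closedBall, dist_zero_right] at this
      calc ‖φ x - φ (x + coordVec L i)‖ ≤ ‖φ x‖ + ‖φ (x + coordVec L i)‖ := norm_sub_le _ _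
        _ ≤ 2 * (1 / (C * Real.sqrt p)) := by rw [← hr]; linarith
    have hsum : (L:ℝ) ^ 2 * (2 * (1 - 1 / C ^ 2)) ≤
        ∑ x : Torus L, ∑ i : Fin 2,
          ((1 + Real.Angle.cos (φ x - φ (x + coordVec L i))) / 2) ^ p := by
      have : (L:ℝ) ^ 2 * (2 * (1 - 1 / C ^ 2)) =
          ∑ _x : Torus L, ∑ _i : Fin 2, (1 - 1 / C ^ 2) := by
        simp [Finset.sum_const, Finset.card_univ, hcardT]
        ring
      rw [this]
      exact Finset.sum_le_sum fun x _ => Finset.sum_le_sum fun i _ => hterm x i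
    rw [nlH]
    calc 2 * β * J * (1 - 1 / C ^ 2) * (L:ℝ) ^ 2
        = β * J * ((L:ℝ) ^ 2 * (2 * (1 - 1 / C ^ 2))) := by ring
      _ ≤ β * J * (∑ x : Torus L, ∑ i : Fin 2,
          ((1 + Real.Angle.cos (φ x - φ (x + coordVec L i))) / 2) ^ p) := by
          apply mul_le_mul_of_nonneg_left hsum (by positivity)
      _ = -β * (-J * ∑ x : Torus L, ∑ i : Fin 2,
          ((1 + Real.Angle.cos (φ x - φ (x + coordVec L i))) / 2) ^ p) := by ring
  -- continuity / integrability
  have hcont : Continuous (fun φ : NLConfig L => Real.exp (-β * nlH L p J φ)) := by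
    apply Real.continuous_exp.comp
    apply Continuous.mul continuous_const
    unfold nlH
    apply Continuous.mul continuous_const
    apply continuous_finset_sum
    intro x _
    apply continuous_finset_sum
    intro i _
    apply Continuous.pow
    apply Continuous.div_const
    apply Continuous.add continuous_const
    exact Real.Angle.continuous_cos.comp ((continuous_apply x).sub (continuous_apply _))
  haveI : IsProbabilityMeasure (nlMeasure L) := by
    rw [nlMeasure]; infer_instance
  have hfint : Integrable (fun φ => Real.exp (-β * nlH L p J φ)) (nlMeasure L) := by
    apply Integrable.mono' (integrable_const (Real.exp (β * J * (2 * (L:ℝ) ^ 2))))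
    · exact hcont.aestronglyMeasurable
    · apply ae_of_all
      intro φ
      rw [Real.norm_eq_abs, abs_of_pos (Real.exp_pos _)]
      apply Real.exp_le_exp.mpr
      have hsum : (∑ x : Torus L, ∑ i : Fin 2,
          ((1 + Real.Angle.cos (φ x - φ (x + coordVec L i))) / 2) ^ p) ≤ 2 * (L:ℝ) ^ 2 := by
        have : (2 : ℝ) * (L:ℝ) ^ 2 = ∑ _x : Torus L, ∑ _i : Fin 2, (1:ℝ) := by
          simp [Finset.sum_const, Finset.card_univ, hcardT]
          ring
        rw [this]
        exact Finset.sum_le_sum fun x _ => Finset.sum_le_sum fun i _ =>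
          bond_term_le_one p _
      rw [nlH]
      calc -β * (-J * ∑ x : Torus L, ∑ i : Fin 2,
          ((1 + Real.Angle.cos (φ x - φ (x + coordVec L i))) / 2) ^ p)
          = β * J * (∑ x : Torus L, ∑ i : Fin 2,
          ((1 + Real.Angle.cos (φ x - φ (x + coordVec L i))) / 2) ^ p) := by ring
        _ ≤ β * J * (2 * (L:ℝ) ^ 2) := by
            apply mul_le_mul_of_nonneg_left hsum (by positivity)
  -- the indicator comparison
  have hindint : Integrable (S.indicator fun _ => c) (nlMeasure L) :=
    (integrable_const c).indicator hSmeas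
  have hmono : ∀ φ, S.indicator (fun _ => c) φ ≤ Real.exp (-β * nlH L p J φ) := by
    intro φ
    by_cases hφ : φ ∈ S
    · rw [Set.indicator_of_mem hφ]; exact hbound φ hφ
    · rw [Set.indicator_of_notMem hφ]; exact (Real.exp_pos _).le
  have key : ∫ φ, S.indicator (fun _ => c) φ ∂(nlMeasure L) ≤ nlZ L β J p := by
    rw [nlZ]
    exact integral_mono hindint hfint hmono
  have heval : ∫ φ, S.indicator (fun _ => c) φ ∂(nlMeasure L)
      = (r / Real.pi) ^ (L ^ 2) * c := by
    rw [integral_indicator_const c hSmeas, measureReal_def, hμS, smul_eq_mul]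
    congr 1
    rw [ENNReal.toReal_pow, ENNReal.toReal_ofReal (by positivity)]
  have hrπ : r / Real.pi = 1 / (Real.pi * C * Real.sqrt p) := by
    rw [hr]
    field_simp
  rw [ge_iff_le, ← hrπ, ← heval]
  exact key
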